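/- Let G be a finite simple graph, M a module of G, and W a shortest path in G that contains two distinct vertices of M. Then either all vertices of W lie in M, or W has length at most 2. -/

import Mathlib

open SimpleGraph

section Aux

variable {V : Type*} {G : SimpleGraph V}

private lemma aux_tri {a b c : V} (h1 : G.Reachable a b) (h2 : G.Reachable b c) :
    G.dist a c ≤ G.dist a b + G.dist b c := by
  obtain ⟨p, hp⟩ := h1.exists_walk_length_eq_dist
  obtain ⟨q, hq⟩ := h2.exists_walk_length_eq_dist
  calc G.dist a c ≤ (p.append q).length := G.dist_le _
    _ = _ := by rw [Walk.length_append, hp, hq]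

private lemma aux_walk_getVert {u v : V} (p : G.Walk u v) (n : ℕ) :
    ∃ q : G.Walk u (p.getVert n), q.length ≤ n := by
  induction p generalizing n with
  | nil => exact ⟨Walk.nil, by simp⟩
  | cons h q ih =>
    cases n with
    | zero => exact ⟨Walk.nil, by simp; rfl⟩
    | succ n =>
      obtain ⟨r, hr⟩ := ih n
      exact ⟨Walk.cons h r, by simpa [Nat.add_le_add_iff_right] using hr⟩

private lemma aux_mixed {M : Set V} : ∀ {s t : V} (p : G.Walk s t),
    (∃ a ∈ p.support, a ∈ M) → (∃ b ∈ p.support, b ∉ M) →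
    ∃ u v, u ∈ M ∧ v ∉ M ∧ v ∈ p.support ∧ G.Adj u v := by
  intro s t p
  induction p with
  | nil =>
    rintro ⟨a, ha, haM⟩ ⟨b, hb, hbM⟩
    simp only [Walk.support_nil, List.mem_singleton] at ha hb
    subst ha; subst hb; exact absurd haM hbM
  | @cons s c t h p ih =>
    rintro ⟨a, ha, haM⟩ ⟨b, hb, hbM⟩
    by_cases hs : s ∈ M <;> by_cases hc : c ∈ M
    · have hb' : b ∈ p.support := by
        have : b = s ∨ b ∈ p.support := by simpa using hb
        rcases this with rfl | h'
        · exact absurd hs hbM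
        · exact h'
      obtain ⟨u, v, h1, h2, h3, h4⟩ := ih ⟨c, p.start_mem_support, hc⟩ ⟨b, hb', hbM⟩
      exact ⟨u, v, h1, h2, by simp [h3], h4⟩
    · exact ⟨s, c, hs, hc, by simp [p.start_mem_support], h⟩
    · exact ⟨c, s, hc, hs, by simp, h.symm⟩
    · have ha' : a ∈ p.support := by
        have : a = s ∨ a ∈ p.support := by simpa using ha
        rcases this with rfl | h'
        · exact absurd haM hs
        · exact h'
      obtain ⟨u, v, h1, h2, h3, h4⟩ := ih ⟨a, ha', haM⟩ ⟨c, p.start_mem_support, hc⟩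
      exact ⟨u, v, h1, h2, by simp [h3], h4⟩

end Aux

/-- `M` is a module of `G`: every vertex outside `M` is adjacent either to all vertices
of `M` or to none of them. -/
def IsModule {V : Type*} (G : SimpleGraph V) (M : Set V) : Prop :=
  ∀ x ∈ M, ∀ y ∈ M, ∀ z ∉ M, (G.Adj x z ↔ G.Adj y z)

/-- If a shortest path `W` contains two distinct vertices of a module `M`,
then either all vertices of `W` lie in `M`, or `W` has length at most `2`. -/
theorem stmt_7 {V : Type*} [Fintype V] (G : SimpleGraph V) (M : Set V) (hM : IsModule G M)
    (s t : V) (W : G.Walk s t) (hpath : W.IsPath) (hlen : W.length = G.dist s t)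
    (x y : V) (hx : x ∈ W.support) (hy : y ∈ W.support) (hxM : x ∈ M) (hyM : y ∈ M)
    (hxy : x ≠ y) :
    (∀ z ∈ W.support, z ∈ M) ∨ W.length ≤ 2 := by
  classical
  by_cases hall : ∀ z ∈ W.support, z ∈ M
  · exact Or.inl hall
  push_neg at hall
  obtain ⟨b, hb, hbM⟩ := hall
  right
  have hreach : ∀ u ∈ W.support, G.Reachable s u := fun u hu => ⟨W.takeUntil u hu⟩
  have hreach2 : ∀ u ∈ W.support, ∀ v ∈ W.support, G.Reachable u v :=
    fun u hu v hv => (hreach u hu).symm.trans (hreach v hv)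
  -- position facts
  have hsplit : ∀ u (hu : u ∈ W.support),
      G.dist s u = (W.takeUntil u hu).length ∧ G.dist s u + G.dist u t = W.length := by
    intro u hu
    have h1 : G.dist s u ≤ (W.takeUntil u hu).length := G.dist_le _
    have h2 : G.dist u t ≤ (W.dropUntil u hu).length := G.dist_le _
    have hL : (W.takeUntil u hu).length + (W.dropUntil u hu).length = W.length := by
      have := congrArg Walk.length (W.take_spec hu)
      rwa [Walk.length_append] at this
    have h3 : W.length ≤ G.dist s u + G.dist u t := by
      rw [hlen]
      exact aux_tri (hreach u hu) (hreach2 u hu t W.end_mem_support)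
    omega
  have hpos : ∀ u (hu : u ∈ W.support), W.getVert (G.dist s u) = u := by
    intro u hu
    have h1 := (hsplit u hu).1
    have h2 := congrArg (fun w : G.Walk s t => w.getVert (W.takeUntil u hu).length)
      (W.take_spec hu)
    simp only [Walk.getVert_append, lt_self_iff_false, if_false, Nat.sub_self,
      Walk.getVert_zero] at h2
    rw [h1]
    exact h2.symm
  have hinj : ∀ u (hu : u ∈ W.support), ∀ v (hv : v ∈ W.support),
      G.dist s u = G.dist s v → u = v := by
    intro u hu v hv h
    rw [← hpos u hu, h, hpos v hv]
  have hget : ∀ p : ℕ, p ≤ W.length →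
      W.getVert p ∈ W.support ∧ G.dist s (W.getVert p) = p := by
    intro p hp
    have hmem : W.getVert p ∈ W.support :=
      Walk.mem_support_iff_exists_getVert.mpr ⟨p, rfl, hp⟩
    refine ⟨hmem, ?_⟩
    have h1 : G.dist s (W.getVert p) ≤ p := by
      obtain ⟨q, hq⟩ := aux_walk_getVert W p
      exact le_trans (G.dist_le q) hq
    have h2 : G.dist (W.getVert p) t ≤ W.length - p := by
      obtain ⟨q, hq⟩ := aux_walk_getVert W.reverse (W.length - p)
      have he : W.reverse.getVert (W.length - p) = W.getVert p := by
        rw [Walk.getVert_reverse]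
        congr 1
        omega
      calc G.dist (W.getVert p) t ≤ ((q.copy rfl he).reverse).length :=
            G.dist_le _
        _ = q.length := by simp
        _ ≤ W.length - p := hq
    have h3 := (hsplit _ hmem).2
    omega
  have hband : ∀ u (hu : u ∈ W.support), ∀ v (hv : v ∈ W.support), G.Adj u v →
      G.dist s v ≤ G.dist s u + 1 ∧ G.dist s u ≤ G.dist s v + 1 ∧
        G.dist s u ≠ G.dist s v := by
    intro u hu v hv h
    have hd : G.dist u v = 1 := dist_eq_one_iff_adj.mpr h
    have hd' : G.dist v u = 1 := by rwa [G.dist_comm] at hd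
    have t1 := aux_tri (hreach u hu) (hreach2 u hu v hv)
    have t2 := aux_tri (hreach v hv) (hreach2 v hv u hu)
    refine ⟨by omega, by omega, fun he => h.ne (hinj u hu v hv he)⟩
  -- the mixed edge and z₀ adjacent to all of M
  obtain ⟨u₀, z₀, hu₀M, hz₀M, hz₀sup, hadj₀⟩ := aux_mixed W ⟨x, hx, hxM⟩ ⟨b, hb, hbM⟩
  have hadjall : ∀ a ∈ M, G.Adj a z₀ := fun a ha => (hM a ha u₀ hu₀M z₀ hz₀M).mpr hadj₀
  have hxb := hband x hx z₀ hz₀sup (hadjall x hxM)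
  have hyb := hband y hy z₀ hz₀sup (hadjall y hyM)
  have hxyd : G.dist s x ≠ G.dist s y := fun h => hxy (hinj x hx y hy h)
  have hxn := (hsplit x hx).2
  have hyn := (hsplit y hy).2
  have hzn := (hsplit z₀ hz₀sup).2
  by_contra hlen2
  push_neg at hlen2
  -- notation
  have hcases : (G.dist s x + 1 = G.dist s z₀ ∧ G.dist s y = G.dist s z₀ + 1) ∨
      (G.dist s y + 1 = G.dist s z₀ ∧ G.dist s x = G.dist s z₀ + 1) := by omega
  have key : ∀ a b' : V, a ∈ W.support → b' ∈ W.support → a ∈ M → b' ∈ M →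
      G.dist s a + 1 = G.dist s z₀ → G.dist s b' = G.dist s z₀ + 1 → False := by
    intro a b' ha hb' haM hb'M hda hdb
    have hkn : G.dist s z₀ + 1 ≤ W.length := by omega
    rcases (by omega : G.dist s z₀ + 2 ≤ W.length ∨ 2 ≤ G.dist s z₀) with hcase | hcase
    · -- look one step past b'
      obtain ⟨hwsup, hwdist⟩ := hget (G.dist s z₀ + 2) hcase
      set w := W.getVert (G.dist s z₀ + 2) with hwdef
      have hwM : w ∉ M := by
        intro hwM
        have := hband w hwsup z₀ hz₀sup (hadjall w hwM)
        omega
      have hb'w : G.Adj b' w := by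
        have hstep := W.adj_getVert_succ (i := G.dist s z₀ + 1) (by omega)
        have hb'' : W.getVert (G.dist s z₀ + 1) = b' := by rw [← hdb]; exact hpos b' hb'
        have h12 : G.dist s z₀ + 1 + 1 = G.dist s z₀ + 2 := by omega
        rw [hb'', h12] at hstep
        exact hstep
      have haw : G.Adj a w := (hM a haM b' hb'M w hwM).mpr hb'w
      have := hband a ha w hwsup haw
      omega
    · -- look one step before a
      obtain ⟨hwsup, hwdist⟩ := hget (G.dist s z₀ - 2) (by omega)
      set w := W.getVert (G.dist s z₀ - 2) with hwdef
      have hwM : w ∉ M := by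
        intro hwM
        have := hband w hwsup z₀ hz₀sup (hadjall w hwM)
        omega
      have haw : G.Adj a w := by
        have := W.adj_getVert_succ (i := G.dist s z₀ - 2) (by omega)
        have he : G.dist s z₀ - 2 + 1 = G.dist s a := by omega
        rw [he, hpos a ha] at this
        exact this.symm
      have hb'w : G.Adj b' w := (hM b' hb'M a haM w hwM).mpr haw
      have := hband b' hb' w hwsup hb'w
      omega
  rcases hcases with ⟨h1, h2⟩ | ⟨h1, h2⟩
  · exact key x y hx hy hxM hyM h1 h2
  · exact key y x hy hx hyM hxM h1 h2
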